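/- For every positive integer n, the double inequality (2n + 2)(2n − 1)/π² · (2^{2n} − 1)/(2^{2n+2} − 1) < |B_{2n+2}|/|B_{2n}| < (2n + 2)(2n + 1)/π² · (2^{2n} − 1)/(2^{2n+2} − 1) holds, where B_m denotes the m-th Bernoulli number. -/

import Mathlib

open Real Filter

private lemma zsummable (m : ℕ) (hm : m ≠ 0) :
    Summable (fun k : ℕ => 1 / (k : ℝ) ^ (2 * m)) :=
  (hasSum_zeta_nat hm).summable

private lemma zpos (m : ℕ) (hm : m ≠ 0) :
    0 < ∑' k : ℕ, 1 / (k : ℝ) ^ (2 * m) := by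
  have h := Summable.le_tsum (zsummable m hm) 1 (fun j _ => by positivity)
  refine lt_of_lt_of_le one_pos ?_
  simpa using h

private lemma osummable (m : ℕ) (hm : m ≠ 0) :
    Summable (fun j : ℕ => 1 / (2 * (j : ℝ) + 1) ^ (2 * m)) := by
  have h := (zsummable m hm).comp_injective
    (fun a b hab => by dsimp at hab; omega : Function.Injective (fun k : ℕ => 2 * k + 1))
  refine h.congr fun j => ?_
  simp only [Function.comp_apply]
  push_cast
  ring_nf

private lemma oddrel (m : ℕ) (hm : m ≠ 0) :
    (2:ℝ) ^ (2 * m) * ∑' j : ℕ, 1 / (2 * (j : ℝ) + 1) ^ (2 * m)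
      = ((2:ℝ) ^ (2 * m) - 1) * ∑' k : ℕ, 1 / (k : ℝ) ^ (2 * m) := by
  have hs := zsummable m hm
  have hse : Summable (fun k : ℕ => 1 / ((2 * k : ℕ) : ℝ) ^ (2 * m)) := by
    refine (hs.comp_injective (fun a b hab => by dsimp at hab; omega :
      Function.Injective (fun k : ℕ => 2 * k))).congr fun j => ?_
    simp [Function.comp]
  have hso : Summable (fun k : ℕ => 1 / ((2 * k + 1 : ℕ) : ℝ) ^ (2 * m)) := by
    refine (hs.comp_injective (fun a b hab => by dsimp at hab; omega :
      Function.Injective (fun k : ℕ => 2 * k + 1))).congr fun j => ?_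
    simp [Function.comp]
  have hsplit := tsum_even_add_odd (f := fun k : ℕ => 1 / (k : ℝ) ^ (2 * m)) hse hso
  have he : ∑' k : ℕ, 1 / ((2 * k : ℕ) : ℝ) ^ (2 * m)
      = (1 / (2:ℝ) ^ (2 * m)) * ∑' k : ℕ, 1 / (k : ℝ) ^ (2 * m) := by
    rw [← tsum_mul_left]
    refine tsum_congr fun k => ?_
    push_cast
    rw [mul_pow, div_mul_div_comm, one_mul]
  have ho : ∑' k : ℕ, 1 / ((2 * k + 1 : ℕ) : ℝ) ^ (2 * m)
      = ∑' j : ℕ, 1 / (2 * (j : ℝ) + 1) ^ (2 * m) :=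
    tsum_congr fun k => by push_cast; ring_nf
  rw [he, ho] at hsplit
  have h2 : (0:ℝ) < (2:ℝ) ^ (2 * m) := by positivity
  field_simp at hsplit
  linarith

private lemma keyA (k : ℕ) :
    ∑' j : ℕ, 1 / (2 * (j : ℝ) + 1) ^ (2 * (k + 2))
      < ∑' j : ℕ, 1 / (2 * (j : ℝ) + 1) ^ (2 * (k + 1)) := by
  refine Summable.tsum_lt_tsum (i := 1) (fun j => ?_) ?_
    (osummable (k + 2) (by omega)) (osummable (k + 1) (by omega))
  · have h1 : (1:ℝ) ≤ 2 * (j : ℝ) + 1 := by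
      have := Nat.cast_nonneg (α := ℝ) j; linarith
    exact one_div_le_one_div_of_le (by positivity)
      (pow_le_pow_right₀ h1 (by omega))
  · norm_num
    have h3 : (3:ℝ) ^ (2 * (k + 1)) < 3 ^ (2 * (k + 2)) :=
      pow_lt_pow_right₀ (by norm_num) (by omega)
    simpa using one_div_lt_one_div_of_lt (by positivity) h3

private lemma tsummable (m : ℕ) (hm : m ≠ 0) :
    Summable (fun j : ℕ => 1 / (2 * (j : ℝ) + 3) ^ (2 * m)) := by
  have h := (osummable m hm).comp_injective
    (fun a b hab => by dsimp at hab; omega : Function.Injective (fun j : ℕ => j + 1))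
  refine h.congr fun j => ?_
  simp only [Function.comp_apply]
  push_cast
  ring_nf

private lemma osplit (m : ℕ) (hm : m ≠ 0) :
    ∑' j : ℕ, 1 / (2 * (j : ℝ) + 1) ^ (2 * m)
      = 1 + ∑' j : ℕ, 1 / (2 * (j : ℝ) + 3) ^ (2 * m) := by
  rw [Summable.tsum_eq_zero_add (osummable m hm)]
  congr 1
  · norm_num
  · exact tsum_congr fun j => by push_cast; ring_nf

private lemma telescope :
    HasSum (fun j : ℕ => 1 / ((j : ℝ) + 1) - 1 / ((j : ℝ) + 2)) 1 := by
  rw [hasSum_iff_tendsto_nat_of_nonneg]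
  · have key : ∀ N : ℕ, ∑ j ∈ Finset.range N, (1 / ((j : ℝ) + 1) - 1 / ((j : ℝ) + 2))
        = 1 - 1 / ((N : ℝ) + 1) := by
      intro N
      calc ∑ j ∈ Finset.range N, (1 / ((j : ℝ) + 1) - 1 / ((j : ℝ) + 2))
          = ∑ j ∈ Finset.range N,
              ((fun i : ℕ => 1 / ((i : ℝ) + 1)) j - (fun i : ℕ => 1 / ((i : ℝ) + 1)) (j + 1)) := by
            refine Finset.sum_congr rfl fun j _ => ?_
            push_cast
            ring
        _ = 1 - 1 / ((N : ℝ) + 1) := by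
            rw [Finset.sum_range_sub' (fun i : ℕ => 1 / ((i : ℝ) + 1)) N]
            norm_num
    simp_rw [key]
    have h0 : Tendsto (fun N : ℕ => 1 / ((N : ℝ) + 1)) atTop (nhds 0) :=
      tendsto_one_div_add_atTop_nhds_zero_nat
    simpa using tendsto_const_nhds.sub h0
  · intro j
    have : (1:ℝ) / ((j : ℝ) + 2) ≤ 1 / ((j : ℝ) + 1) :=
      one_div_le_one_div_of_le (by positivity) (by linarith)
    linarith

private lemma T2bound :
    ∑' j : ℕ, 1 / (2 * (j : ℝ) + 3) ^ (2 * 1) ≤ 1 / 4 := by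
  have hq : HasSum (fun j : ℕ => (1/4 : ℝ) * (1 / ((j : ℝ) + 1) - 1 / ((j : ℝ) + 2))) (1/4) := by
    simpa using telescope.mul_left (1/4 : ℝ)
  have hle : ∀ j : ℕ, 1 / (2 * (j : ℝ) + 3) ^ (2 * 1)
      ≤ (1/4 : ℝ) * (1 / ((j : ℝ) + 1) - 1 / ((j : ℝ) + 2)) := by
    intro j
    have h1 : (0:ℝ) < (j : ℝ) + 1 := by positivity
    have h2 : (0:ℝ) < (j : ℝ) + 2 := by positivity
    have heq : (1/4 : ℝ) * (1 / ((j : ℝ) + 1) - 1 / ((j : ℝ) + 2))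
        = 1 / (4 * ((j : ℝ) + 1) * ((j : ℝ) + 2)) := by
      field_simp
      ring
    rw [heq]
    apply one_div_le_one_div_of_le (by positivity)
    norm_num
    nlinarith [Nat.cast_nonneg (α := ℝ) j]
  calc ∑' j : ℕ, 1 / (2 * (j : ℝ) + 3) ^ (2 * 1)
      ≤ ∑' j : ℕ, (1/4 : ℝ) * (1 / ((j : ℝ) + 1) - 1 / ((j : ℝ) + 2)) :=
        Summable.tsum_le_tsum hle (tsummable 1 one_ne_zero) hq.summable
    _ = 1/4 := hq.tsum_eq

private lemma keyB (k : ℕ) :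
    (2 * (k : ℝ) + 1) * ∑' j : ℕ, 1 / (2 * (j : ℝ) + 1) ^ (2 * (k + 1))
      < (2 * (k : ℝ) + 3) * ∑' j : ℕ, 1 / (2 * (j : ℝ) + 1) ^ (2 * (k + 2)) := by
  rw [osplit (k + 1) (by omega), osplit (k + 2) (by omega)]
  set T1 := ∑' j : ℕ, 1 / (2 * (j : ℝ) + 3) ^ (2 * (k + 1)) with hT1
  set T2 := ∑' j : ℕ, 1 / (2 * (j : ℝ) + 3) ^ (2 * (k + 2)) with hT2
  have hT2n : (0:ℝ) ≤ T2 := tsum_nonneg fun j => by positivity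
  have hT1n : (0:ℝ) ≤ T1 := tsum_nonneg fun j => by positivity
  have hstep : ∀ j : ℕ, 1 / (2 * (j : ℝ) + 3) ^ (2 * (k + 1))
      ≤ (1/9 : ℝ) ^ k * (1 / (2 * (j : ℝ) + 3) ^ (2 * 1)) := by
    intro j
    have hjn : (0:ℝ) ≤ (j : ℝ) := Nat.cast_nonneg j
    have hb : (0:ℝ) < 2 * (j : ℝ) + 3 := by positivity
    have h9 : (9:ℝ) ^ k ≤ ((2 * (j : ℝ) + 3) ^ 2) ^ k := by
      apply pow_le_pow_left₀ (by norm_num)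
      nlinarith
    have hkey : (9:ℝ) ^ k * (2 * (j : ℝ) + 3) ^ (2 * 1)
        ≤ (2 * (j : ℝ) + 3) ^ (2 * (k + 1)) := by
      calc (9:ℝ) ^ k * (2 * (j : ℝ) + 3) ^ (2 * 1)
          ≤ ((2 * (j : ℝ) + 3) ^ 2) ^ k * (2 * (j : ℝ) + 3) ^ (2 * 1) :=
            mul_le_mul_of_nonneg_right h9 (by positivity)
        _ = (2 * (j : ℝ) + 3) ^ (2 * (k + 1)) := by
            rw [← pow_mul, ← pow_add]
            congr 1
    have h := one_div_le_one_div_of_le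
      (by positivity : (0:ℝ) < (9:ℝ) ^ k * (2 * (j : ℝ) + 3) ^ (2 * 1)) hkey
    calc 1 / (2 * (j : ℝ) + 3) ^ (2 * (k + 1))
        ≤ 1 / ((9:ℝ) ^ k * (2 * (j : ℝ) + 3) ^ (2 * 1)) := h
      _ = (1/9 : ℝ) ^ k * (1 / (2 * (j : ℝ) + 3) ^ (2 * 1)) := by
          rw [one_div_pow, div_mul_div_comm, one_mul]
  have hT1b : T1 ≤ (1/9 : ℝ) ^ k * (1/4) := by
    have hs1 : Summable (fun j : ℕ => (1/9 : ℝ) ^ k * (1 / (2 * (j : ℝ) + 3) ^ (2 * 1))) :=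
      (tsummable 1 one_ne_zero).mul_left _
    have h := Summable.tsum_le_tsum hstep (tsummable (k + 1) (by omega)) hs1
    rw [tsum_mul_left] at h
    calc T1 ≤ (1/9 : ℝ) ^ k * ∑' j : ℕ, 1 / (2 * (j : ℝ) + 3) ^ (2 * 1) := h
      _ ≤ (1/9 : ℝ) ^ k * (1/4) := mul_le_mul_of_nonneg_left T2bound (by positivity)
  have h9k : (2 * (k : ℝ) + 1) * (1/9 : ℝ) ^ k ≤ 1 := by
    have h1 : (1:ℝ) + 8 * k ≤ 9 ^ k := by
      have := one_add_mul_le_pow (by norm_num : (-2:ℝ) ≤ 8) k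
      norm_num at this
      linarith
    have h9pos : (0:ℝ) < 9 ^ k := by positivity
    rw [one_div_pow, mul_one_div, div_le_one h9pos]
    linarith
  have hT1fin : (2 * (k : ℝ) + 1) * T1 < 2 := by
    have hc : (0:ℝ) ≤ 2 * (k : ℝ) + 1 := by positivity
    have h := mul_le_mul_of_nonneg_left hT1b hc
    nlinarith [pow_nonneg (by norm_num : (0:ℝ) ≤ 1/9) k]
  nlinarith [mul_nonneg (by positivity : (0:ℝ) ≤ 2 * (k : ℝ) + 3) hT2n,
    Nat.cast_nonneg (α := ℝ) k]

private lemma zpos0 (m : ℕ) (hm : m ≠ 0) :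
    0 < ∑' k : ℕ, 1 / (k : ℝ) ^ (2 * m) := by
  have h := Summable.le_tsum (zsummable m hm) 1 (fun j _ => by positivity)
  refine lt_of_lt_of_le one_pos ?_
  simpa using h

private lemma bernabs (m : ℕ) (hm : m ≠ 0) :
    (∑' k : ℕ, 1 / (k : ℝ) ^ (2 * m)) * (((2 * m).factorial : ℕ) : ℝ) * 2
      = |(bernoulli (2 * m) : ℝ)| * ((2:ℝ) ^ (2 * m) * π ^ (2 * m)) := by
  have hZ := (hasSum_zeta_nat hm).tsum_eq
  have hZpos := zpos0 m hm
  have hfac : (0:ℝ) < (((2 * m).factorial : ℕ) : ℝ) := by positivity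
  have h2 : (2:ℝ) ^ (2 * m - 1) * 2 = 2 ^ (2 * m) := by
    rw [← pow_succ]
    congr 1
    omega
  have hpos : 0 < (-1:ℝ) ^ (m + 1) * (bernoulli (2 * m) : ℝ) := by
    rw [hZ] at hZpos
    have h2p : (0:ℝ) < (2:ℝ) ^ (2 * m - 1) := by positivity
    have hπp : (0:ℝ) < π ^ (2 * m) := by positivity
    have := mul_pos hZpos hfac
    rw [div_mul_cancel₀ _ hfac.ne'] at this
    nlinarith [mul_pos h2p hπp]
  have hsB : |(bernoulli (2 * m) : ℝ)| = (-1:ℝ) ^ (m + 1) * (bernoulli (2 * m) : ℝ) := by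
    rcases Nat.even_or_odd (m + 1) with hp | hp
    · rw [hp.neg_one_pow] at hpos ⊢
      rw [one_mul] at hpos ⊢
      exact abs_of_pos hpos
    · rw [hp.neg_one_pow] at hpos ⊢
      have : (bernoulli (2 * m) : ℝ) < 0 := by linarith [neg_pos.mp (by linarith : 0 < -(bernoulli (2 * m) : ℝ))]
      rw [abs_of_neg this]
      ring
  rw [hZ, hsB, ← h2]
  field_simp


theorem stmt9 (n : ℕ) (hn : 1 ≤ n) :
    (2 * (n : ℝ) + 2) * (2 * (n : ℝ) - 1) / π ^ 2 *
        (((2 : ℝ) ^ (2 * n) - 1) / ((2 : ℝ) ^ (2 * n + 2) - 1)) <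
      |(bernoulli (2 * n + 2) : ℝ)| / |(bernoulli (2 * n) : ℝ)| ∧
    |(bernoulli (2 * n + 2) : ℝ)| / |(bernoulli (2 * n) : ℝ)| <
      (2 * (n : ℝ) + 2) * (2 * (n : ℝ) + 1) / π ^ 2 *
        (((2 : ℝ) ^ (2 * n) - 1) / ((2 : ℝ) ^ (2 * n + 2) - 1)) := by
  obtain ⟨k, rfl⟩ : ∃ k, n = k + 1 := ⟨n - 1, by omega⟩
  rw [show 2 * (k + 1) + 2 = 2 * (k + 2) from by ring]
  have hZ1pos := zpos0 (k + 1) (by omega)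
  have hZ2pos := zpos0 (k + 2) (by omega)
  have hb1 := bernabs (k + 1) (by omega)
  have hb2 := bernabs (k + 2) (by omega)
  have he1 := oddrel (k + 1) (by omega)
  have he2 := oddrel (k + 2) (by omega)
  have hA := keyA k
  have hB := keyB k
  have hfac : (((2 * (k + 2)).factorial : ℕ) : ℝ)
      = (2 * (k : ℝ) + 4) * (2 * (k : ℝ) + 3) * (((2 * (k + 1)).factorial : ℕ) : ℝ) := by
    rw [show 2 * (k + 2) = (2 * (k + 1) + 1) + 1 from by ring, Nat.factorial_succ,
      Nat.factorial_succ]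
    push_cast
    ring
  have hF1 : (0:ℝ) < (((2 * (k + 1)).factorial : ℕ) : ℝ) := by positivity
  have hP1 : (0:ℝ) < (2:ℝ) ^ (2 * (k + 1)) - 1 := by
    have h := pow_lt_pow_right₀ (one_lt_two (α := ℝ)) (show 0 < 2 * (k + 1) by omega)
    simp only [pow_zero] at h
    linarith
  have hP2 : (0:ℝ) < (2:ℝ) ^ (2 * (k + 2)) - 1 := by
    have h := pow_lt_pow_right₀ (one_lt_two (α := ℝ)) (show 0 < 2 * (k + 2) by omega)
    simp only [pow_zero] at h
    linarith
  have hb1pos : 0 < |(bernoulli (2 * (k + 1)) : ℝ)| := by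
    have hx : (0:ℝ) < (∑' j : ℕ, 1 / (j : ℝ) ^ (2 * (k + 1)))
        * (((2 * (k + 1)).factorial : ℕ) : ℝ) * 2 :=
      mul_pos (mul_pos hZ1pos hF1) two_pos
    rw [hb1] at hx
    have hc : (0:ℝ) < (2:ℝ) ^ (2 * (k + 1)) * π ^ (2 * (k + 1)) := by positivity
    nlinarith [hx, hc]
  have hR : |(bernoulli (2 * (k + 2)) : ℝ)| / |(bernoulli (2 * (k + 1)) : ℝ)|
      = (∑' j : ℕ, 1 / (j : ℝ) ^ (2 * (k + 2))) * ((2 * (k : ℝ) + 3) * (2 * (k : ℝ) + 4))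
        / ((∑' j : ℕ, 1 / (j : ℝ) ^ (2 * (k + 1))) * (4 * π ^ 2)) := by
    rw [div_eq_div_iff hb1pos.ne' (mul_pos hZ1pos (show (0:ℝ) < 4 * π ^ 2 by positivity)).ne']
    apply mul_right_cancel₀
      (show ((2:ℝ) ^ (2 * (k + 2)) * π ^ (2 * (k + 2))) ≠ 0 by positivity)
    rw [hfac] at hb2
    linear_combination
      ((∑' j : ℕ, 1 / (j : ℝ) ^ (2 * (k + 2))) * ((2 * (k : ℝ) + 3) * (2 * (k : ℝ) + 4))
        * (4 * π ^ 2)) * hb1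
      - ((∑' j : ℕ, 1 / (j : ℝ) ^ (2 * (k + 1))) * (4 * π ^ 2)) * hb2
  have hπsq : (0:ℝ) < π ^ 2 := by positivity
  constructor
  · have hm := mul_lt_mul_of_pos_left hB
      (show (0:ℝ) < (2 * (k : ℝ) + 4) * 2 ^ (2 * (k + 1)) * π ^ 2 * 4 by positivity)
    have final : (2 * (k : ℝ) + 4) * (2 * (k : ℝ) + 1) * ((2:ℝ) ^ (2 * (k + 1)) - 1)
          * ((∑' j : ℕ, 1 / (j : ℝ) ^ (2 * (k + 1))) * (4 * π ^ 2))
        < (∑' j : ℕ, 1 / (j : ℝ) ^ (2 * (k + 2))) * ((2 * (k : ℝ) + 3) * (2 * (k : ℝ) + 4))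
          * (π ^ 2 * ((2:ℝ) ^ (2 * (k + 2)) - 1)) := by
      calc (2 * (k : ℝ) + 4) * (2 * (k : ℝ) + 1) * ((2:ℝ) ^ (2 * (k + 1)) - 1)
            * ((∑' j : ℕ, 1 / (j : ℝ) ^ (2 * (k + 1))) * (4 * π ^ 2))
          = ((2 * (k : ℝ) + 4) * 2 ^ (2 * (k + 1)) * π ^ 2 * 4)
            * ((2 * (k : ℝ) + 1) * ∑' j : ℕ, 1 / (2 * (j : ℝ) + 1) ^ (2 * (k + 1))) := by
            linear_combination (-(4 * π ^ 2 * (2 * (k : ℝ) + 4) * (2 * (k : ℝ) + 1))) * he1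
        _ < ((2 * (k : ℝ) + 4) * 2 ^ (2 * (k + 1)) * π ^ 2 * 4)
            * ((2 * (k : ℝ) + 3) * ∑' j : ℕ, 1 / (2 * (j : ℝ) + 1) ^ (2 * (k + 2))) := hm
        _ = (∑' j : ℕ, 1 / (j : ℝ) ^ (2 * (k + 2))) * ((2 * (k : ℝ) + 3) * (2 * (k : ℝ) + 4))
            * (π ^ 2 * ((2:ℝ) ^ (2 * (k + 2)) - 1)) := by
            linear_combination (π ^ 2 * (2 * (k : ℝ) + 3) * (2 * (k : ℝ) + 4)) * he2
    rw [hR, div_mul_div_comm, div_lt_div_iff₀ (mul_pos hπsq hP2) (mul_pos hZ1pos (by positivity))]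
    push_cast
    linarith [final]
  · have hm := mul_lt_mul_of_pos_left hA
      (show (0:ℝ) < (2 * (k : ℝ) + 3) * (2 * (k : ℝ) + 4) * 2 ^ (2 * (k + 1)) * π ^ 2 * 4
        by positivity)
    have final : (∑' j : ℕ, 1 / (j : ℝ) ^ (2 * (k + 2))) * ((2 * (k : ℝ) + 3) * (2 * (k : ℝ) + 4))
          * (π ^ 2 * ((2:ℝ) ^ (2 * (k + 2)) - 1))
        < (2 * (k : ℝ) + 4) * (2 * (k : ℝ) + 3) * ((2:ℝ) ^ (2 * (k + 1)) - 1)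
          * ((∑' j : ℕ, 1 / (j : ℝ) ^ (2 * (k + 1))) * (4 * π ^ 2)) := by
      calc (∑' j : ℕ, 1 / (j : ℝ) ^ (2 * (k + 2))) * ((2 * (k : ℝ) + 3) * (2 * (k : ℝ) + 4))
            * (π ^ 2 * ((2:ℝ) ^ (2 * (k + 2)) - 1))
          = ((2 * (k : ℝ) + 3) * (2 * (k : ℝ) + 4) * 2 ^ (2 * (k + 1)) * π ^ 2 * 4)
            * ∑' j : ℕ, 1 / (2 * (j : ℝ) + 1) ^ (2 * (k + 2)) := by
            linear_combination (-(π ^ 2 * (2 * (k : ℝ) + 3) * (2 * (k : ℝ) + 4))) * he2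
        _ < ((2 * (k : ℝ) + 3) * (2 * (k : ℝ) + 4) * 2 ^ (2 * (k + 1)) * π ^ 2 * 4)
            * ∑' j : ℕ, 1 / (2 * (j : ℝ) + 1) ^ (2 * (k + 1)) := hm
        _ = (2 * (k : ℝ) + 4) * (2 * (k : ℝ) + 3) * ((2:ℝ) ^ (2 * (k + 1)) - 1)
            * ((∑' j : ℕ, 1 / (j : ℝ) ^ (2 * (k + 1))) * (4 * π ^ 2)) := by
            linear_combination (4 * π ^ 2 * (2 * (k : ℝ) + 3) * (2 * (k : ℝ) + 4)) * he1
    rw [hR, div_mul_div_comm, div_lt_div_iff₀ (mul_pos hZ1pos (by positivity)) (mul_pos hπsq hP2)]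
    push_cast
    linarith [final]
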